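/- Linear polynomial independence of the scaled Macdonald functions (Lemma 1): let ν ≥ 0 and let f and g be real polynomials. If f(x) ρ_ν(x) + g(x) ρ_{ν+1}(x) = 0 for all x > 0, then f is the zero polynomial and g is the zero polynomial. -/

import Mathlib

open MeasureTheory Real Set

/-- The scaled Macdonald function `ρ_ν(x) = ∫₀^∞ t^(ν-1) e^(-t - x/t) dt`. -/
noncomputable def rho (ν : ℝ) (x : ℝ) : ℝ :=
  ∫ t in Ioi (0:ℝ), t ^ (ν - 1) * Real.exp (-t - x / t)

open Filter Topology

lemma F_meas (μ x : ℝ) : Measurable (fun t : ℝ => t ^ (μ - 1) * Real.exp (-t - x / t)) := by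
  fun_prop

lemma F_nonneg (μ x : ℝ) {t : ℝ} (ht : 0 < t) : 0 ≤ t ^ (μ - 1) * Real.exp (-t - x / t) :=
  mul_nonneg (Real.rpow_nonneg ht.le _) (Real.exp_pos _).le

lemma integrableOn_F (μ : ℝ) {x : ℝ} (hx : 0 < x) :
    IntegrableOn (fun t : ℝ => t ^ (μ - 1) * Real.exp (-t - x / t)) (Ioi (0:ℝ)) := by
  obtain ⟨n, hn⟩ := exists_nat_ge (μ - 1)
  have h0 : Tendsto (fun t : ℝ => t ^ (μ - 1 - n) * Real.exp (-x / t)) (𝓝[>] (0:ℝ)) (𝓝 0) := by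
    have h1 := tendsto_rpow_mul_exp_neg_mul_atTop_nhds_zero (n + 1 - μ) x hx
    have h3 := h1.comp (tendsto_inv_nhdsGT_zero (𝕜 := ℝ))
    refine h3.congr' ?_
    filter_upwards [self_mem_nhdsWithin] with t ht
    have ht' : (0:ℝ) < t := ht
    simp only [Function.comp]
    rw [Real.inv_rpow ht'.le, ← Real.rpow_neg ht'.le]
    ring_nf
  obtain ⟨δ, hδ0, hδ⟩ : ∃ δ ∈ Ioi (0:ℝ), ∀ t ∈ Ioc (0:ℝ) δ, t ^ (μ - 1 - n) * Real.exp (-x / t) < 1 :=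
    mem_nhdsGT_iff_exists_Ioc_subset.1 (h0.eventually_lt_const one_pos)
  set M : ℝ := max 1 (δ ^ (μ - 1 - (n:ℝ))) with hM
  have hM1 : (1:ℝ) ≤ M := le_max_left _ _
  have hbound : ∀ t ∈ Ioi (0:ℝ), t ^ (μ - 1 - (n:ℝ)) * Real.exp (-x / t) ≤ M := by
    intro t ht
    rcases le_or_gt t δ with h | h
    · exact le_trans (hδ t ⟨ht, h⟩).le hM1
    · calc t ^ (μ - 1 - (n:ℝ)) * Real.exp (-x / t)
          ≤ δ ^ (μ - 1 - (n:ℝ)) * 1 := by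
            apply mul_le_mul ?_ (Real.exp_le_one_iff.2 ?_) (Real.exp_pos _).le
              (Real.rpow_nonneg (le_of_lt hδ0) _)
            · exact Real.rpow_le_rpow_of_nonpos hδ0 h.le (by linarith)
            · have h1 : (0:ℝ) < t := lt_trans hδ0 h
              rw [neg_div]
              exact neg_nonpos.2 (by positivity)
      _ ≤ M := by rw [mul_one]; exact le_max_right _ _
  -- dominating function
  have hdom : IntegrableOn (fun t : ℝ => M * (t ^ n * Real.exp (-t))) (Ioi (0:ℝ)) := by
    have h1 : IntegrableOn (fun t : ℝ => Real.exp (-t) * t ^ ((n:ℝ) + 1 - 1)) (Ioi (0:ℝ)) :=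
      Real.GammaIntegral_convergent (by positivity)
    have h2 : IntegrableOn (fun t : ℝ => t ^ n * Real.exp (-t)) (Ioi (0:ℝ)) := by
      refine h1.congr_fun ?_ measurableSet_Ioi
      intro t ht
      simp [add_sub_cancel_right, Real.rpow_natCast, mul_comm]
    exact h2.const_mul M
  refine hdom.integrable.mono' ((F_meas μ x).aestronglyMeasurable) ?_
  rw [ae_restrict_iff' measurableSet_Ioi]
  filter_upwards with t
  intro ht
  have ht' : (0:ℝ) < t := ht
  rw [Real.norm_of_nonneg (F_nonneg μ x ht')]
  have key : t ^ (μ - 1) * Real.exp (-t - x / t)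
      = (t ^ (μ - 1 - (n:ℝ)) * Real.exp (-x / t)) * (t ^ n * Real.exp (-t)) := by
    have hpow : t ^ (μ - 1) = t ^ (μ - 1 - (n:ℝ)) * t ^ ((n:ℝ)) := by
      rw [← Real.rpow_add ht']; ring_nf
    rw [show (-t - x / t) = (-x / t) + (-t) by ring, Real.exp_add,
      ← Real.rpow_natCast t n, hpow]
    ring
  rw [key]
  have h2 : 0 ≤ t ^ n * Real.exp (-t) := by positivity
  exact mul_le_mul_of_nonneg_right (hbound t ht) h2

lemma rho_pos (μ : ℝ) {x : ℝ} (hx : 0 < x) : 0 < rho μ x := by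
  rw [rho]
  rw [setIntegral_pos_iff_support_of_nonneg_ae ?_ (integrableOn_F μ hx)]
  · refine lt_of_lt_of_le ?_ (measure_mono (?_ : Ioi (0:ℝ) ⊆ _))
    · rw [Real.volume_Ioi]; exact ENNReal.zero_lt_top
    · intro t ht
      refine ⟨?_, ht⟩
      have ht' : (0:ℝ) < t := ht
      exact ne_of_gt (mul_pos (Real.rpow_pos_of_pos ht' _) (Real.exp_pos _))
  · rw [EventuallyLE, ae_restrict_iff' measurableSet_Ioi]
    filter_upwards with t ht
    exact F_nonneg μ x ht

lemma subst_lemma {x : ℝ} (hx : 0 < x) (G : ℝ → ℝ) :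
    ∫ t in Ioo (0:ℝ) (Real.sqrt x), G t
      = ∫ s in Ioi (Real.sqrt x), (x / s ^ 2) * G (x / s) := by
  have hr : 0 < Real.sqrt x := Real.sqrt_pos.2 hx
  have hrr : Real.sqrt x * Real.sqrt x = x := Real.mul_self_sqrt hx.le
  have himg : (fun s : ℝ => x / s) '' Ioi (Real.sqrt x) = Ioo 0 (Real.sqrt x) := by
    ext y
    constructor
    · rintro ⟨s, hs, rfl⟩
      have hs' : 0 < s := lt_trans hr hs
      constructor
      · positivity
      · rw [div_lt_iff₀ hs']
        nlinarith [mul_pos hr (sub_pos.2 (show Real.sqrt x < s from hs))]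
    · rintro ⟨hy0, hy1⟩
      refine ⟨x / y, ?_, ?_⟩
      · simp only [mem_Ioi]
        rw [lt_div_iff₀ hy0]
        nlinarith [mul_pos (sub_pos.2 hy1) hy0]
      · field_simp
  have hderiv : ∀ s ∈ Ioi (Real.sqrt x),
      HasDerivWithinAt (fun s : ℝ => x / s) (-(x / s ^ 2)) (Ioi (Real.sqrt x)) s := by
    intro s hs
    have hs' : s ≠ 0 := ne_of_gt (lt_trans hr hs)
    simpa [div_eq_mul_inv, neg_div, mul_comm] using
      ((hasDerivAt_inv hs').const_mul x).hasDerivWithinAt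
  have hinj : InjOn (fun s : ℝ => x / s) (Ioi (Real.sqrt x)) := by
    intro a ha b hb hab
    have ha' : a ≠ 0 := ne_of_gt (lt_trans hr ha)
    have hb' : b ≠ 0 := ne_of_gt (lt_trans hr hb)
    field_simp at hab
    exact hab.symm
  have := integral_image_eq_integral_abs_deriv_smul measurableSet_Ioi hderiv hinj G
  rw [himg] at this
  rw [this]
  apply setIntegral_congr_fun measurableSet_Ioi
  intro s hs
  have hs' : 0 < s := lt_trans hr hs
  simp only [smul_eq_mul, abs_neg]
  rw [abs_of_pos (by positivity : (0:ℝ) < x / s ^ 2)]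

lemma rho_lower (ν : ℝ) (hν : 0 ≤ ν) {x : ℝ} (hx : 0 < x) :
    Real.sqrt x * rho ν x ≤ 2 * rho (ν + 1) x := by
  set r := Real.sqrt x with hrdef
  have hr : 0 < r := Real.sqrt_pos.2 hx
  have hrr : r * r = x := Real.mul_self_sqrt hx.le
  set F : ℝ → ℝ := fun t => t ^ (ν - 1) * Real.exp (-t - x / t) with hF
  set G : ℝ → ℝ := fun t => t ^ (ν + 1 - 1) * Real.exp (-t - x / t) with hG
  have hFint : IntegrableOn F (Ioi 0) := integrableOn_F ν hx
  have hGint : IntegrableOn G (Ioi 0) := integrableOn_F (ν + 1) hx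
  have hFintr : IntegrableOn F (Ioi r) := hFint.mono_set (Ioi_subset_Ioi hr.le)
  have hGintr : IntegrableOn G (Ioi r) := hGint.mono_set (Ioi_subset_Ioi hr.le)
  have hIci : Ici r ⊆ Ioi (0:ℝ) := fun t ht => lt_of_lt_of_le hr ht
  have hsplit : rho ν x = (∫ t in Ioo 0 r, F t) + ∫ t in Ici r, F t := by
    rw [show rho ν x = ∫ t in Ioi (0:ℝ), F t from rfl, ← Ioo_union_Ici_eq_Ioi hr]
    exact setIntegral_union ((Iio_disjoint_Ici le_rfl).mono_left Ioo_subset_Iio_self) measurableSet_Ici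
      (hFint.mono_set Ioo_subset_Ioi_self) (hFint.mono_set hIci)
  have hIcieq : (∫ t in Ici r, F t) = ∫ t in Ioi r, F t := integral_Ici_eq_integral_Ioi
  -- part 1 : reflected piece is dominated
  have h1 : (∫ t in Ioo 0 r, F t) ≤ ∫ s in Ioi r, F s := by
    rw [subst_lemma hx F]
    apply integral_mono_of_nonneg ?_ hFintr ?_
    · rw [EventuallyLE, ae_restrict_iff' measurableSet_Ioi]
      filter_upwards with s hs
      have hs' : 0 < s := lt_trans hr hs
      have hxs : 0 < x / s := by positivity
      exact mul_nonneg (by positivity) (F_nonneg ν x hxs)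
    · rw [EventuallyLE, ae_restrict_iff' measurableSet_Ioi]
      filter_upwards with s hs
      have hs' : 0 < s := lt_trans hr hs
      have hsx : x ≤ s ^ 2 := by nlinarith [hs.out]
      have hxxs : x / (x / s) = s := by field_simp
      show (x / s ^ 2) * ((x / s) ^ (ν - 1) * Real.exp (-(x / s) - x / (x / s))) ≤
        s ^ (ν - 1) * Real.exp (-s - x / s)
      rw [hxxs, show (-(x / s) - s) = -s - x / s by ring]
      rw [← mul_assoc]
      apply mul_le_mul_of_nonneg_right ?_ (Real.exp_pos _).le
      rw [Real.div_rpow hx.le hs'.le, div_mul_div_comm, div_le_iff₀ (by positivity)]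
      have e1 : x * x ^ (ν - 1) = x ^ ν := by
        nth_rewrite 1 [← Real.rpow_one x]
        rw [← Real.rpow_add hx]; ring_nf
      have e2 : s ^ (ν - 1) * (s ^ 2 * s ^ (ν - 1)) = s ^ (2 * ν) := by
        rw [← Real.rpow_natCast s 2, ← Real.rpow_add hs', ← Real.rpow_add hs']
        norm_num; ring_nf
      have e3 : x ^ ν ≤ s ^ (2 * ν) := by
        calc x ^ ν ≤ (s ^ 2) ^ ν := Real.rpow_le_rpow hx.le hsx hν
          _ = s ^ (2 * ν) := by
            rw [← Real.rpow_natCast s 2, ← Real.rpow_mul hs'.le]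
            norm_num [mul_comm]
      rw [e1, e2]; exact e3
  -- part 2 : multiply by r
  have h2 : r * (∫ s in Ioi r, F s) ≤ ∫ s in Ioi r, G s := by
    rw [← integral_const_mul]
    apply integral_mono_of_nonneg ?_ hGintr ?_
    · rw [EventuallyLE, ae_restrict_iff' measurableSet_Ioi]
      filter_upwards with s hs
      have hs' : 0 < s := lt_trans hr hs
      exact mul_nonneg hr.le (F_nonneg ν x hs')
    · rw [EventuallyLE, ae_restrict_iff' measurableSet_Ioi]
      filter_upwards with s hs
      have hs' : 0 < s := lt_trans hr hs
      show r * (s ^ (ν - 1) * Real.exp (-s - x / s)) ≤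
        s ^ (ν + 1 - 1) * Real.exp (-s - x / s)
      have e4 : s ^ (ν + 1 - 1) = s * s ^ (ν - 1) := by
        nth_rewrite 2 [← Real.rpow_one s]
        rw [← Real.rpow_add hs']; ring_nf
      rw [e4, mul_assoc]
      apply mul_le_mul_of_nonneg_right (le_of_lt hs) ?_
      exact mul_nonneg (Real.rpow_nonneg hs'.le _) (Real.exp_pos _).le
  have h3 : (∫ s in Ioi r, G s) ≤ rho (ν + 1) x := by
    apply setIntegral_mono_set hGint ?_ ?_
    · rw [EventuallyLE, ae_restrict_iff' measurableSet_Ioi]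
      filter_upwards with s hs
      exact F_nonneg (ν + 1) x hs
    · exact HasSubset.Subset.eventuallyLE (Ioi_subset_Ioi hr.le)
  have hFIoi_nonneg : 0 ≤ ∫ s in Ioi r, F s := by
    apply setIntegral_nonneg measurableSet_Ioi
    intro s hs
    exact F_nonneg ν x (lt_trans hr hs)
  calc r * rho ν x ≤ r * (2 * ∫ s in Ioi r, F s) := by
        rw [hsplit, hIcieq]
        apply mul_le_mul_of_nonneg_left ?_ hr.le
        linarith
    _ = 2 * (r * ∫ s in Ioi r, F s) := by ring
    _ ≤ 2 * ∫ s in Ioi r, G s := by linarith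
    _ ≤ 2 * rho (ν + 1) x := by linarith

lemma rho_lb (ν : ℝ) {x : ℝ} (hx1 : 1 ≤ x) :
    min 1 ((2:ℝ) ^ (ν - 1)) * Real.sqrt x ^ (ν - 1) * Real.exp (-(2 * Real.sqrt x + 1))
      ≤ rho ν x := by
  set r := Real.sqrt x with hrdef
  have hx : (0:ℝ) < x := lt_of_lt_of_le one_pos hx1
  have hr1 : 1 ≤ r := by
    rw [hrdef, show (1:ℝ) = Real.sqrt 1 by simp]
    exact Real.sqrt_le_sqrt hx1
  have hr : 0 < r := lt_of_lt_of_le one_pos hr1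
  set F : ℝ → ℝ := fun t => t ^ (ν - 1) * Real.exp (-t - x / t) with hF
  set c : ℝ := min 1 ((2:ℝ) ^ (ν - 1)) * r ^ (ν - 1) * Real.exp (-(2 * r + 1)) with hc
  have hsub : Ioc r (r + 1) ⊆ Ioi (0:ℝ) := fun t ht => lt_trans hr ht.1
  have hFint : IntegrableOn F (Ioi 0) := integrableOn_F ν hx
  have hptwise : ∀ t ∈ Ioc r (r + 1), c ≤ F t := by
    intro t ht
    have ht0 : 0 < t := lt_trans hr ht.1
    have ht2 : t ≤ 2 * r := le_trans ht.2 (by linarith)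
    have hb1 : min 1 ((2:ℝ) ^ (ν - 1)) * r ^ (ν - 1) ≤ t ^ (ν - 1) := by
      rcases le_or_gt 1 ν with h | h
      · calc min 1 ((2:ℝ) ^ (ν - 1)) * r ^ (ν - 1) ≤ 1 * r ^ (ν - 1) :=
              mul_le_mul_of_nonneg_right (min_le_left _ _) (Real.rpow_nonneg hr.le _)
          _ = r ^ (ν - 1) := one_mul _
          _ ≤ t ^ (ν - 1) := Real.rpow_le_rpow hr.le ht.1.le (by linarith)
      · calc min 1 ((2:ℝ) ^ (ν - 1)) * r ^ (ν - 1) ≤ (2:ℝ) ^ (ν - 1) * r ^ (ν - 1) :=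
              mul_le_mul_of_nonneg_right (min_le_right _ _) (Real.rpow_nonneg hr.le _)
          _ = (2 * r) ^ (ν - 1) := (Real.mul_rpow (by norm_num) hr.le).symm
          _ ≤ t ^ (ν - 1) := Real.rpow_le_rpow_of_nonpos ht0 ht2 (by linarith)
    have hb2 : Real.exp (-(2 * r + 1)) ≤ Real.exp (-t - x / t) := by
      apply Real.exp_le_exp.2
      have h1 : x / t ≤ x / r := by gcongr; exact ht.1.le
      have h2 : x / r = r := Real.div_sqrt
      have h3 : t ≤ r + 1 := ht.2
      linarith
    calc c = (min 1 ((2:ℝ) ^ (ν - 1)) * r ^ (ν - 1)) * Real.exp (-(2 * r + 1)) := by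
          rw [hc]
      _ ≤ t ^ (ν - 1) * Real.exp (-t - x / t) :=
          mul_le_mul hb1 hb2 (Real.exp_pos _).le
            (le_trans (by positivity) hb1)
      _ = F t := rfl
  have hmeas : (volume (Ioc r (r+1))).toReal = 1 := by
    rw [Real.volume_Ioc, ENNReal.toReal_ofReal (by norm_num)]
    ring
  have h1 : c * (volume (Ioc r (r+1))).toReal ≤ ∫ t in Ioc r (r+1), F t :=
    setIntegral_ge_of_const_le_real measurableSet_Ioc
      (by rw [Real.volume_Ioc]; exact ENNReal.ofReal_ne_top) hptwise
      (hFint.mono_set hsub)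
  have h2 : (∫ t in Ioc r (r+1), F t) ≤ rho ν x := by
    apply setIntegral_mono_set hFint ?_ (HasSubset.Subset.eventuallyLE hsub)
    rw [EventuallyLE, ae_restrict_iff' measurableSet_Ioi]
    filter_upwards with s hs
    exact F_nonneg ν x hs
  rw [hmeas, mul_one] at h1
  exact le_trans h1 h2

lemma tail_bound (ν : ℝ) (hν : 0 ≤ ν) {x : ℝ} (hx : 0 < x) :
    (∫ t in Ioi (2 * Real.sqrt x), t ^ (ν + 1 - 1) * Real.exp (-t - x / t))
      ≤ Real.exp (-(9 / 4) * Real.sqrt x)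
        * ∫ t in Ioi (0:ℝ), t ^ ν * Real.exp (-(1/8) * t) := by
  set r := Real.sqrt x with hrdef
  have hr : 0 < r := Real.sqrt_pos.2 hx
  have hrr : r * r = x := Real.mul_self_sqrt hx.le
  have hC0int : IntegrableOn (fun t : ℝ => t ^ ν * Real.exp (-(1/8) * t)) (Ioi (0:ℝ)) := by
    have := integrableOn_rpow_mul_exp_neg_mul_rpow (s := ν) (p := 1) (b := 1/8)
      (by linarith) zero_lt_one (by norm_num)
    simpa [Real.rpow_one] using this
  have h1 : (∫ t in Ioi (2 * r), t ^ (ν + 1 - 1) * Real.exp (-t - x / t))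
      ≤ ∫ t in Ioi (2 * r), Real.exp (-(9/4) * r) * (t ^ ν * Real.exp (-(1/8) * t)) := by
    apply integral_mono_of_nonneg ?_ ((hC0int.mono_set
        (Ioi_subset_Ioi (by positivity))).const_mul _) ?_
    · rw [EventuallyLE, ae_restrict_iff' measurableSet_Ioi]
      filter_upwards with t ht
      have ht0 : 0 < t := lt_trans (by positivity) ht
      exact F_nonneg (ν + 1) x ht0
    · rw [EventuallyLE, ae_restrict_iff' measurableSet_Ioi]
      filter_upwards with t ht
      have ht2r : 2 * r < t := ht
      have ht0 : 0 < t := lt_trans (by positivity) ht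
      have hexp : Real.exp (-t - x / t) ≤ Real.exp (-(9/4) * r) * Real.exp (-(1/8) * t) := by
        rw [← Real.exp_add]
        apply Real.exp_le_exp.2
        have key : (9/4) * r + (1/8) * t ≤ t + x / t := by
          have h' : ((9/4) * r + (1/8) * t) * t ≤ (t + x / t) * t := by
            rw [add_mul (t), div_mul_cancel₀ _ (ne_of_gt ht0)]
            nlinarith [mul_nonneg (sub_nonneg.2 ht2r.le)
              (show (0:ℝ) ≤ 7 * t - 4 * r by linarith)]
          exact le_of_mul_le_mul_right h' ht0
        linarith
      calc t ^ (ν + 1 - 1) * Real.exp (-t - x / t)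
          = t ^ ν * Real.exp (-t - x / t) := by norm_num
        _ ≤ t ^ ν * (Real.exp (-(9/4) * r) * Real.exp (-(1/8) * t)) :=
            mul_le_mul_of_nonneg_left hexp (Real.rpow_nonneg ht0.le _)
        _ = Real.exp (-(9/4) * r) * (t ^ ν * Real.exp (-(1/8) * t)) := by ring
  have h2 : (∫ t in Ioi (2*r), Real.exp (-(9/4) * r) * (t ^ ν * Real.exp (-(1/8) * t)))
      ≤ Real.exp (-(9/4) * r) * ∫ t in Ioi (0:ℝ), t ^ ν * Real.exp (-(1/8) * t) := by
    rw [integral_const_mul]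
    apply mul_le_mul_of_nonneg_left ?_ (Real.exp_pos _).le
    apply setIntegral_mono_set hC0int ?_
      (HasSubset.Subset.eventuallyLE (Ioi_subset_Ioi (by positivity)))
    rw [EventuallyLE, ae_restrict_iff' measurableSet_Ioi]
    filter_upwards with t ht
    have ht0 : (0:ℝ) < t := ht
    positivity
  exact le_trans h1 h2

lemma sqrt_tendsto_atTop : Tendsto Real.sqrt atTop atTop := by
  apply Filter.tendsto_atTop_atTop.2
  intro b
  refine ⟨(max b 0) ^ 2, fun a ha => ?_⟩
  calc b ≤ max b 0 := le_max_left _ _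
    _ = Real.sqrt ((max b 0) ^ 2) := (Real.sqrt_sq (le_max_right _ _)).symm
    _ ≤ Real.sqrt a := Real.sqrt_le_sqrt ha

lemma rho_upper (ν : ℝ) (hν : 0 ≤ ν) :
    ∀ᶠ x : ℝ in atTop, rho (ν + 1) x ≤ 3 * Real.sqrt x * rho ν x := by
  set C0 : ℝ := ∫ t in Ioi (0:ℝ), t ^ ν * Real.exp (-(1/8) * t) with hC0
  set m : ℝ := min 1 ((2:ℝ) ^ (ν - 1)) with hm
  have hm0 : 0 < m := lt_min one_pos (Real.rpow_pos_of_pos two_pos _)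
  have hinf : Tendsto (fun x : ℝ => m * Real.exp (Real.sqrt x / 4 - 1)) atTop atTop := by
    apply Tendsto.const_mul_atTop hm0
    exact Real.tendsto_exp_atTop.comp (tendsto_atTop_add_const_right _ _
      (sqrt_tendsto_atTop.atTop_div_const (by norm_num)))
  filter_upwards [hinf.eventually_ge_atTop C0, eventually_ge_atTop (1:ℝ)] with x hsm hx1
  set r := Real.sqrt x with hrdef
  have hx : (0:ℝ) < x := lt_of_lt_of_le one_pos hx1
  have hr1 : 1 ≤ r := by
    rw [hrdef, show (1:ℝ) = Real.sqrt 1 by simp]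
    exact Real.sqrt_le_sqrt hx1
  have hr : 0 < r := lt_of_lt_of_le one_pos hr1
  set F : ℝ → ℝ := fun t => t ^ (ν - 1) * Real.exp (-t - x / t) with hF
  set G : ℝ → ℝ := fun t => t ^ (ν + 1 - 1) * Real.exp (-t - x / t) with hG
  have hFint : IntegrableOn F (Ioi 0) := integrableOn_F ν hx
  have hGint : IntegrableOn G (Ioi 0) := integrableOn_F (ν + 1) hx
  have h2r : (0:ℝ) < 2 * r := by positivity
  have hsplit : rho (ν + 1) x = (∫ t in Ioc 0 (2*r), G t) + ∫ t in Ioi (2*r), G t := by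
    rw [show rho (ν+1) x = ∫ t in Ioi (0:ℝ), G t from rfl, ← Ioc_union_Ioi_eq_Ioi h2r.le]
    exact setIntegral_union
      (Set.disjoint_left.2 fun a ha hb => absurd ha.2 (not_le.2 hb)) measurableSet_Ioi
      (hGint.mono_set Ioc_subset_Ioi_self) (hGint.mono_set (Ioi_subset_Ioi h2r.le))
  have hrho_nonneg : 0 ≤ rho ν x := by
    apply setIntegral_nonneg measurableSet_Ioi
    intro s hs
    exact F_nonneg ν x hs
  have hA : (∫ t in Ioc 0 (2*r), G t) ≤ (2*r) * rho ν x := by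
    have step1 : (∫ t in Ioc 0 (2*r), G t) ≤ ∫ t in Ioc 0 (2*r), (2*r) * F t := by
      apply integral_mono_of_nonneg ?_ ((hFint.mono_set Ioc_subset_Ioi_self).const_mul _) ?_
      · rw [EventuallyLE, ae_restrict_iff' measurableSet_Ioc]
        filter_upwards with t ht
        exact F_nonneg (ν+1) x ht.1
      · rw [EventuallyLE, ae_restrict_iff' measurableSet_Ioc]
        filter_upwards with t ht
        have ht0 : 0 < t := ht.1
        show t ^ (ν + 1 - 1) * Real.exp (-t - x / t) ≤ 2 * r * (t ^ (ν - 1) * Real.exp (-t - x / t))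
        have e4 : t ^ (ν + 1 - 1) = t * t ^ (ν - 1) := by
          nth_rewrite 2 [← Real.rpow_one t]
          rw [← Real.rpow_add ht0]; ring_nf
        rw [e4, mul_assoc]
        apply mul_le_mul_of_nonneg_right ht.2
        exact mul_nonneg (Real.rpow_nonneg ht0.le _) (Real.exp_pos _).le
    have step2 : (∫ t in Ioc 0 (2*r), (2*r) * F t) = (2*r) * ∫ t in Ioc 0 (2*r), F t :=
      integral_const_mul _ _
    have step3 : (∫ t in Ioc 0 (2*r), F t) ≤ rho ν x := by
      apply setIntegral_mono_set hFint ?_ (HasSubset.Subset.eventuallyLE Ioc_subset_Ioi_self)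
      rw [EventuallyLE, ae_restrict_iff' measurableSet_Ioi]
      filter_upwards with s hs
      exact F_nonneg ν x hs
    calc (∫ t in Ioc 0 (2*r), G t) ≤ (2*r) * ∫ t in Ioc 0 (2*r), F t := by
          rw [← step2]; exact step1
      _ ≤ (2*r) * rho ν x := mul_le_mul_of_nonneg_left step3 h2r.le
  have hB : (∫ t in Ioi (2*r), G t) ≤ r * rho ν x := by
    have t1 : (∫ t in Ioi (2*r), G t) ≤ Real.exp (-(9/4) * r) * C0 := tail_bound ν hν hx
    have t2 : Real.exp (-(9/4) * r) * C0 ≤ Real.exp (-(9/4) * r) * (m * Real.exp (r/4 - 1)) :=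
      mul_le_mul_of_nonneg_left hsm (Real.exp_pos _).le
    have t3 : Real.exp (-(9/4) * r) * (m * Real.exp (r/4 - 1)) = m * Real.exp (-(2*r + 1)) := by
      rw [mul_comm, mul_assoc, ← Real.exp_add]
      ring_nf
    have t4 : m * Real.exp (-(2*r + 1)) ≤ r * (m * r ^ (ν - 1) * Real.exp (-(2*r + 1))) := by
      have e5 : r * (m * r ^ (ν - 1) * Real.exp (-(2*r + 1)))
          = (m * Real.exp (-(2*r + 1))) * (r * r ^ (ν - 1)) := by ring
      have e6 : r * r ^ (ν - 1) = r ^ ν := by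
        nth_rewrite 1 [← Real.rpow_one r]
        rw [← Real.rpow_add hr]; ring_nf
      rw [e5, e6]
      nth_rewrite 1 [← mul_one (m * Real.exp (-(2*r+1)))]
      apply mul_le_mul_of_nonneg_left (Real.one_le_rpow hr1 hν) (by positivity)
    have t5 : r * (m * r ^ (ν - 1) * Real.exp (-(2*r + 1))) ≤ r * rho ν x :=
      mul_le_mul_of_nonneg_left (rho_lb ν hx1) hr.le
    linarith
  rw [hsplit]
  calc (∫ t in Ioc 0 (2*r), G t) + (∫ t in Ioi (2*r), G t)
      ≤ (2*r) * rho ν x + r * rho ν x := add_le_add hA hB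
    _ = 3 * r * rho ν x := by ring

theorem linear_polynomial_independence (ν : ℝ) (hν : 0 ≤ ν) (f g : Polynomial ℝ)
    (h : ∀ x : ℝ, 0 < x → f.eval x * rho ν x + g.eval x * rho (ν + 1) x = 0) :
    f = 0 ∧ g = 0 := by
  have hzero : ∀ p : Polynomial ℝ, (∀ x : ℝ, 0 < x → p.eval x = 0) → p = 0 := by
    intro p hp
    apply p.eq_zero_of_infinite_isRoot
    exact Set.Infinite.mono (fun x hx => hp x hx) (Set.Ioi_infinite (0:ℝ))
  have hg : g = 0 := by
    by_contra hg0
    have hev : ∀ᶠ x : ℝ in atTop,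
        (Polynomial.X * g ^ 2).eval x / 4 ≤ (f ^ 2).eval x ∧
        (f ^ 2).eval x ≤ 9 * (Polynomial.X * g ^ 2).eval x ∧
        0 < (Polynomial.X * g ^ 2).eval x := by
      filter_upwards [rho_upper ν hν, eventually_gt_atTop (0:ℝ), g.eventually_no_roots hg0]
        with x hub hx hgx
      have hlb := rho_lower ν hν hx
      have hρ := rho_pos ν hx
      have hρ1 := rho_pos (ν + 1) hx
      have heq := h x hx
      have hsq : Real.sqrt x * Real.sqrt x = x := Real.mul_self_sqrt hx.le
      have hsx : 0 < Real.sqrt x := Real.sqrt_pos.2 hx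
      simp only [Polynomial.eval_mul, Polynomial.eval_pow, Polynomial.eval_X]
      set a := f.eval x with ha
      set b := g.eval x with hb
      set w := rho ν x with hw
      set w1 := rho (ν + 1) x with hw1
      have hbne : b ≠ 0 := fun hc => hgx hc
      have hb2 : 0 < b ^ 2 := lt_of_le_of_ne (sq_nonneg b) (Ne.symm (pow_ne_zero 2 hbne))
      have habs : a * w = -(b * w1) := by linarith
      have key : a ^ 2 * w ^ 2 = b ^ 2 * w1 ^ 2 := by
        have : (a * w) ^ 2 = (b * w1) ^ 2 := by rw [habs]; ring
        nlinarith [this]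
      have h1 : x * w ^ 2 ≤ 4 * w1 ^ 2 := by
        nlinarith [mul_nonneg (sub_nonneg.2 hlb)
          (by positivity : (0:ℝ) ≤ 2 * w1 + Real.sqrt x * w), hsq]
      have h2 : w1 ^ 2 ≤ 9 * x * w ^ 2 := by
        nlinarith [mul_nonneg (sub_nonneg.2 hub)
          (by positivity : (0:ℝ) ≤ 3 * Real.sqrt x * w + w1), hsq]
      have hw2 : 0 < w ^ 2 := by positivity
      refine ⟨?_, ?_, mul_pos hx hb2⟩
      · have h1' : (x * b ^ 2) * w ^ 2 ≤ (4 * a ^ 2) * w ^ 2 := by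
          nlinarith [mul_le_mul_of_nonneg_left h1 (sq_nonneg b), key]
        have := le_of_mul_le_mul_right h1' hw2
        linarith
      · have h2' : (a ^ 2) * w ^ 2 ≤ (9 * (x * b ^ 2)) * w ^ 2 := by
          nlinarith [mul_le_mul_of_nonneg_left h2 (sq_nonneg b), key]
        have := le_of_mul_le_mul_right h2' hw2
        linarith
    have hf0 : f ≠ 0 := by
      intro hf
      obtain ⟨x, h1, h2, h3⟩ := hev.exists
      rw [hf] at h1
      simp only [Polynomial.eval_pow, Polynomial.eval_zero] at h1
      norm_num at h1
      simp only [Polynomial.eval_mul, Polynomial.eval_pow, Polynomial.eval_X] at h3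
      linarith
    set p := f ^ 2 with hp
    set q := Polynomial.X * g ^ 2 with hq
    have hpne : p ≠ 0 := pow_ne_zero 2 hf0
    have hqne : q ≠ 0 := mul_ne_zero Polynomial.X_ne_zero (pow_ne_zero 2 hg0)
    have hdeg : p.degree ≠ q.degree := by
      rw [Polynomial.degree_eq_natDegree hpne, Polynomial.degree_eq_natDegree hqne]
      have e1 : p.natDegree = 2 * f.natDegree := by
        rw [hp, Polynomial.natDegree_pow]
      have e2 : q.natDegree = 1 + 2 * g.natDegree := by
        rw [hq, Polynomial.natDegree_mul Polynomial.X_ne_zero (pow_ne_zero 2 hg0),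
          Polynomial.natDegree_X, Polynomial.natDegree_pow]
      intro hc
      have : p.natDegree = q.natDegree := by exact_mod_cast hc
      omega
    rcases lt_or_gt_of_ne hdeg with hlt | hgt
    · have htend := Polynomial.div_tendsto_zero_of_degree_lt p q hlt
      obtain ⟨x, hx1, hx2, hx3, hx4⟩ :=
        ((htend.eventually_lt_const (show (0:ℝ) < 1/4 by norm_num)).and hev).exists
      have : (1:ℝ)/4 ≤ p.eval x / q.eval x := by
        rw [le_div_iff₀ hx4]
        linarith
      linarith
    · have htend := Polynomial.div_tendsto_zero_of_degree_lt q p hgt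
      obtain ⟨x, hx1, hx2, hx3, hx4⟩ :=
        ((htend.eventually_lt_const (show (0:ℝ) < 1/9 by norm_num)).and hev).exists
      have hppos : 0 < p.eval x := by linarith
      have : (1:ℝ)/9 ≤ q.eval x / p.eval x := by
        rw [le_div_iff₀ hppos]
        linarith
      linarith
  have hf : f = 0 := by
    apply hzero
    intro x hx
    have := h x hx
    rw [hg] at this
    simp only [Polynomial.eval_zero, zero_mul, add_zero] at this
    exact (mul_eq_zero.1 this).resolve_right (ne_of_gt (rho_pos ν hx))
  exact ⟨hf, hg⟩
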